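/- Let A be a bigraded cdga with A_{2k}^{k-1} = 0 for all k, and suppose that for every k ≤ r and every q ≠ 2k one has H^k(A_q^•) = 0. Then the inclusion K → A, where K^k = ker(d : A_{2k}^k → A_{2k}^{k+1}) with zero differential, induces an injection H^i(K) → H^i(A) for every i and an isomorphism for i ≤ r. -/

import Mathlib

/-- let `A` be a bigraded cdga (`V q k` is the weight-`q`,
degree-`k` piece) with `A_{2k}^{k-1} = 0` for all `k`, and suppose
`H^k(A_q^•) = 0` for every `k ≤ r` and `q ≠ 2k`.  Then the inclusion
`K → A`, where `K^k = ker(d : A_{2k}^k → A_{2k}^{k+1})` with zero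
differential, induces an injection `H^i(K) → H^i(A)` for every `i` (first
clause: an element of `K` which is a boundary in the total complex is zero)
and an isomorphism for `i ≤ r` (second clause: every cohomology class of the
total complex is represented, modulo boundaries, by a cocycle in `K`).
The total complex in degree `k` is `⨁ q, V q k`, and the inclusion of `K^k`
is `DFinsupp.single (2k)`. -/
theorem stmt_3
    (r : WithTop ℤ) (hr : 0 ≤ r)
    (V : ℤ → ℤ → Type) [∀ q k, AddCommGroup (V q k)] [∀ q k, Module ℚ (V q k)]
    (d : ∀ q k : ℤ, V q k →ₗ[ℚ] V q (k + 1))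
    (mul : ∀ q q' k k' : ℤ, V q k →ₗ[ℚ] V q' k' →ₗ[ℚ] V (q + q') (k + k'))
    (hdd : ∀ (q k : ℤ) (x : V q k), d q (k + 1) (d q k x) = 0)
    (hvanish : ∀ k : ℤ, ∀ x : V (2 * k) (k - 1), x = 0)
    (hacyclic : ∀ q k : ℤ, q ≠ 2 * (k + 1) → ((k + 1 : ℤ) : WithTop ℤ) ≤ r →
      ∀ x : V q (k + 1), d q (k + 1) x = 0 → ∃ y : V q k, d q k y = x) :
    -- injectivity on cohomology in every degree:
    (∀ (k : ℤ) (x : V (2 * (k + 1)) (k + 1)), d (2 * (k + 1)) (k + 1) x = 0 →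
      (∃ y : Π₀ q : ℤ, V q k,
        DFinsupp.mapRange.linearMap (fun q => d q k) y
          = DFinsupp.single (β := fun q => V q (k + 1)) (2 * (k + 1)) x) → x = 0) ∧
    -- surjectivity on cohomology in degrees ≤ r:
    (∀ k : ℤ, ((k + 1 : ℤ) : WithTop ℤ) ≤ r →
      ∀ x : Π₀ q : ℤ, V q (k + 1),
        DFinsupp.mapRange.linearMap (fun q => d q (k + 1)) x = 0 →
        ∃ z : V (2 * (k + 1)) (k + 1), d (2 * (k + 1)) (k + 1) z = 0 ∧
          ∃ y : Π₀ q : ℤ, V q k,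
            DFinsupp.mapRange.linearMap (fun q => d q k) y
              = x - DFinsupp.single (β := fun q => V q (k + 1)) (2 * (k + 1)) z) := by

  constructor
  · intro k x hdx ⟨y, hy⟩
    have h := DFunLike.congr_fun hy (2 * (k + 1))
    simp only [DFinsupp.mapRange.linearMap_apply, DFinsupp.mapRange_apply,
      DFinsupp.single_eq_same] at h
    have hv : ∀ w : V (2 * (k + 1)) k, w = 0 := by
      have := hvanish (k + 1)
      rwa [show k + 1 - 1 = k by ring] at this
    rw [hv (y (2 * (k + 1))), map_zero] at h
    exact h.symm
  · intro k hk x hx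
    have hdx : ∀ q, d q (k + 1) (x q) = 0 := by
      intro q
      have := DFunLike.congr_fun hx q
      simpa using this
    refine ⟨x (2 * (k + 1)), hdx _, ?_⟩
    classical
    let f : ∀ q : ℤ, V q k := fun q =>
      if h : q = 2 * (k + 1) then 0
      else Classical.choose (hacyclic q k h hk (x q) (hdx q))
    refine ⟨DFinsupp.mk x.support (fun q => f q), ?_⟩
    ext q
    simp only [DFinsupp.mapRange.linearMap_apply, DFinsupp.mapRange_apply,
      DFinsupp.sub_apply, DFinsupp.mk_apply]
    by_cases hq : q = 2 * (k + 1)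
    · subst hq
      simp only [DFinsupp.single_eq_same]
      have : f (2 * (k + 1)) = 0 := dif_pos rfl
      split <;> simp [this]
    · rw [DFinsupp.single_eq_of_ne hq, sub_zero]
      by_cases hmem : q ∈ x.support
      · rw [dif_pos hmem]
        have : f q = Classical.choose (hacyclic q k hq hk (x q) (hdx q)) := dif_neg hq
        rw [this]
        exact Classical.choose_spec (hacyclic q k hq hk (x q) (hdx q))
      · rw [dif_neg hmem, map_zero]
        exact (DFinsupp.notMem_support_iff.mp hmem).symm
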